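/- For all m, n ∈ ℕ, c_{m,n} − c_{m,n}⁻¹ = (q − q⁻¹) · (P₁₁ + P₂₂), where P₁₁ (resp. P₂₂) is the F-linear endomorphism of V_{m+n} ⊗[F] V_{m+n} fixing each basis vector e_{ι₁ i} ⊗ e_{ι₁ j} with i, j ∈ Fin m (resp. each e_{ι₂ i} ⊗ e_{ι₂ j} with i, j ∈ Fin n) and annihilating all other basis vectors. (This is the GL_m × GL_n specialization of the modified skein relation in the paper's Lemma on Rep_q L_t: the HOMFLY relation holds only on the one-coloured sectors, while mixed crossings are involutive.) -/

import Mathlib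

open scoped TensorProduct

set_option synthInstance.maxHeartbeats 1000000
set_option maxHeartbeats 1000000
noncomputable section

abbrev F : Type := RatFunc ℂ

def q : F := RatFunc.X

abbrev V (N : ℕ) : Type := Fin N → F

def bV (N : ℕ) : Module.Basis (Fin N) F (V N) := Pi.basisFun F (Fin N)

def e {N : ℕ} (i : Fin N) : V N := bV N i

def bVV (N : ℕ) : Module.Basis (Fin N × Fin N) F (V N ⊗[F] V N) :=
  (bV N).tensorProduct (bV N)

/-- The HOMFLY R-matrix β_N. -/
def β (N : ℕ) : V N ⊗[F] V N →ₗ[F] V N ⊗[F] V N :=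
  (bVV N).constr F fun p =>
    if p.1 = p.2 then q • (e p.1 ⊗ₜ[F] e p.1)
    else if p.1 < p.2 then e p.2 ⊗ₜ[F] e p.1
    else e p.2 ⊗ₜ[F] e p.1 + (q - q⁻¹) • (e p.1 ⊗ₜ[F] e p.2)

/-- Linear inclusion induced by a map of index sets. -/
def emb {a N : ℕ} (f : Fin a → Fin N) : V a →ₗ[F] V N :=
  (bV a).constr F fun i => e (f i)

def ι₁ (m n : ℕ) : Fin m → Fin (m + n) := Fin.castAdd n
def ι₂ (m n : ℕ) : Fin n → Fin (m + n) := Fin.natAdd m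

/-- The Levi braiding c_{m,n}. -/
def levi (m n : ℕ) : V (m + n) ⊗[F] V (m + n) →ₗ[F] V (m + n) ⊗[F] V (m + n) :=
  (bVV (m + n)).constr F fun p =>
    if ha : (p.1 : ℕ) < m then
      if hb : (p.2 : ℕ) < m then
        TensorProduct.map (emb (ι₁ m n)) (emb (ι₁ m n))
          (β m (e ⟨p.1, ha⟩ ⊗ₜ[F] e ⟨p.2, hb⟩))
      else e p.2 ⊗ₜ[F] e p.1
    else
      if hb : (p.2 : ℕ) < m then e p.2 ⊗ₜ[F] e p.1
      else
        TensorProduct.map (emb (ι₂ m n)) (emb (ι₂ m n))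
          (β n (e ⟨(p.1 : ℕ) - m, by have := p.1.isLt; omega⟩ ⊗ₜ[F]
                e ⟨(p.2 : ℕ) - m, by have := p.2.isLt; omega⟩))

/-- Partial trace over the second tensor factor. -/
def ptr {N : ℕ} (Φ : V N ⊗[F] V N →ₗ[F] V N ⊗[F] V N) : V N →ₗ[F] V N :=
  (bV N).constr F fun i =>
    ∑ j : Fin N,
      (TensorProduct.rid F (V N))
        (TensorProduct.map LinearMap.id (LinearMap.proj j) (Φ (e i ⊗ₜ[F] e j)))

/-- Quantum integer [n]_q. -/
def qint (n : ℤ) : F := (q ^ n - q ^ (-n)) / (q - q⁻¹)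

/-- The projection `P₁₁` onto the span of the green-green basis vectors
`e (ι₁ i) ⊗ e (ι₁ j)`. -/
def P11 (m n : ℕ) : V (m + n) ⊗[F] V (m + n) →ₗ[F] V (m + n) ⊗[F] V (m + n) :=
  (bVV (m + n)).constr F fun p =>
    if (p.1 : ℕ) < m ∧ (p.2 : ℕ) < m then e p.1 ⊗ₜ[F] e p.2 else 0

/-- The projection `P₂₂` onto the span of the red-red basis vectors
`e (ι₂ i) ⊗ e (ι₂ j)`. -/
def P22 (m n : ℕ) : V (m + n) ⊗[F] V (m + n) →ₗ[F] V (m + n) ⊗[F] V (m + n) :=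
  (bVV (m + n)).constr F fun p =>
    if m ≤ (p.1 : ℕ) ∧ m ≤ (p.2 : ℕ) then e p.1 ⊗ₜ[F] e p.2 else 0

-- auxiliary lemmas for levi_modified_skein

lemma bVV_apply (N : ℕ) (i j : Fin N) : bVV N (i, j) = e i ⊗ₜ[F] e j :=
  Module.Basis.tensorProduct_apply _ _ _ _

lemma beta_e (N : ℕ) (i j : Fin N) :
    β N (e i ⊗ₜ[F] e j) =
      if i = j then q • (e i ⊗ₜ[F] e i)
      else if i < j then e j ⊗ₜ[F] e i
      else e j ⊗ₜ[F] e i + (q - q⁻¹) • (e i ⊗ₜ[F] e j) := by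
  conv_lhs => rw [← bVV_apply]
  rw [β, Module.Basis.constr_basis]

lemma emb_e {a N : ℕ} (f : Fin a → Fin N) (i : Fin a) : emb f (e i) = e (f i) :=
  Module.Basis.constr_basis _ _ _ _

lemma levi_e (m n : ℕ) (a b : Fin (m + n)) :
    levi m n (e a ⊗ₜ[F] e b) =
      if ha : (a : ℕ) < m then
        if hb : (b : ℕ) < m then
          TensorProduct.map (emb (ι₁ m n)) (emb (ι₁ m n))
            (β m (e ⟨a, ha⟩ ⊗ₜ[F] e ⟨b, hb⟩))
        else e b ⊗ₜ[F] e a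
      else
        if hb : (b : ℕ) < m then e b ⊗ₜ[F] e a
        else
          TensorProduct.map (emb (ι₂ m n)) (emb (ι₂ m n))
            (β n (e ⟨(a : ℕ) - m, by have := a.isLt; omega⟩ ⊗ₜ[F]
                  e ⟨(b : ℕ) - m, by have := b.isLt; omega⟩)) := by
  conv_lhs => rw [← bVV_apply]
  rw [levi, Module.Basis.constr_basis]

lemma P11_e (m n : ℕ) (a b : Fin (m + n)) :
    P11 m n (e a ⊗ₜ[F] e b) =
      if (a : ℕ) < m ∧ (b : ℕ) < m then e a ⊗ₜ[F] e b else 0 := by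
  conv_lhs => rw [← bVV_apply]
  rw [P11, Module.Basis.constr_basis]

lemma P22_e (m n : ℕ) (a b : Fin (m + n)) :
    P22 m n (e a ⊗ₜ[F] e b) =
      if m ≤ (a : ℕ) ∧ m ≤ (b : ℕ) then e a ⊗ₜ[F] e b else 0 := by
  conv_lhs => rw [← bVV_apply]
  rw [P22, Module.Basis.constr_basis]

lemma q_ne_zero : q ≠ 0 := RatFunc.X_ne_zero

lemma beta_skein (N : ℕ) :
    β N ∘ₗ β N = (q - q⁻¹) • β N + LinearMap.id := by
  apply (bVV N).ext
  rintro ⟨i, j⟩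
  simp only [bVV_apply, LinearMap.comp_apply, LinearMap.add_apply,
    LinearMap.smul_apply, LinearMap.id_apply]
  rcases lt_trichotomy i j with h | h | h
  · rw [beta_e, if_neg h.ne, if_pos h, beta_e, if_neg h.ne', if_neg (not_lt.mpr h.le)]
    abel
  · subst h
    rw [beta_e, if_pos rfl, map_smul, beta_e, if_pos rfl, smul_smul,
      show q * q = (q - q⁻¹) * q + 1 by rw [sub_mul, inv_mul_cancel₀ q_ne_zero]; ring, add_smul, mul_smul, one_smul]
  · rw [beta_e, if_neg h.ne', if_neg (not_lt.mpr h.le), map_add, map_smul,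
      beta_e, if_neg h.ne, if_pos h, beta_e, if_neg h.ne', if_neg (not_lt.mpr h.le)]
    abel

lemma ι₁_val (m n : ℕ) (i : Fin m) : ((ι₁ m n i : Fin (m+n)) : ℕ) = i := rfl
lemma ι₂_val (m n : ℕ) (i : Fin n) : ((ι₂ m n i : Fin (m+n)) : ℕ) = m + i := rfl

lemma levi_green (m n : ℕ) :
    levi m n ∘ₗ TensorProduct.map (emb (ι₁ m n)) (emb (ι₁ m n)) =
      TensorProduct.map (emb (ι₁ m n)) (emb (ι₁ m n)) ∘ₗ β m := by
  apply (bVV m).ext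
  rintro ⟨i, j⟩
  simp only [bVV_apply, LinearMap.comp_apply, TensorProduct.map_tmul, emb_e]
  rw [levi_e]
  have hi : ((ι₁ m n i : Fin (m+n)) : ℕ) < m := i.isLt
  have hj : ((ι₁ m n j : Fin (m+n)) : ℕ) < m := j.isLt
  rw [dif_pos hi, dif_pos hj,
    show (⟨((ι₁ m n i : Fin (m+n)) : ℕ), hi⟩ : Fin m) = i from Fin.ext rfl,
    show (⟨((ι₁ m n j : Fin (m+n)) : ℕ), hj⟩ : Fin m) = j from Fin.ext rfl]

lemma levi_red (m n : ℕ) :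
    levi m n ∘ₗ TensorProduct.map (emb (ι₂ m n)) (emb (ι₂ m n)) =
      TensorProduct.map (emb (ι₂ m n)) (emb (ι₂ m n)) ∘ₗ β n := by
  apply (bVV n).ext
  rintro ⟨i, j⟩
  simp only [bVV_apply, LinearMap.comp_apply, TensorProduct.map_tmul, emb_e]
  rw [levi_e]
  have hi : ¬ ((ι₂ m n i : Fin (m+n)) : ℕ) < m := by simp [ι₂_val]
  have hj : ¬ ((ι₂ m n j : Fin (m+n)) : ℕ) < m := by simp [ι₂_val]
  rw [dif_neg hi, dif_neg hj,
    show (⟨((ι₂ m n i : Fin (m+n)) : ℕ) - m, by have := (ι₂ m n i).isLt; omega⟩ : Fin n) = i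
      from Fin.ext (by simp [ι₂_val]),
    show (⟨((ι₂ m n j : Fin (m+n)) : ℕ) - m, by have := (ι₂ m n j).isLt; omega⟩ : Fin n) = j
      from Fin.ext (by simp [ι₂_val])]

lemma P11_green (m n : ℕ) :
    P11 m n ∘ₗ TensorProduct.map (emb (ι₁ m n)) (emb (ι₁ m n)) =
      TensorProduct.map (emb (ι₁ m n)) (emb (ι₁ m n)) := by
  apply (bVV m).ext
  rintro ⟨i, j⟩
  simp only [bVV_apply, LinearMap.comp_apply, TensorProduct.map_tmul, emb_e]
  rw [P11_e, if_pos ⟨i.isLt, j.isLt⟩]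

lemma P22_green (m n : ℕ) :
    P22 m n ∘ₗ TensorProduct.map (emb (ι₁ m n)) (emb (ι₁ m n)) = 0 := by
  apply (bVV m).ext
  rintro ⟨i, j⟩
  simp only [bVV_apply, LinearMap.comp_apply, TensorProduct.map_tmul, emb_e,
    LinearMap.zero_apply]
  rw [P22_e, if_neg]
  rintro ⟨h, -⟩
  exact absurd i.isLt (not_lt.mpr h)

lemma P11_red (m n : ℕ) :
    P11 m n ∘ₗ TensorProduct.map (emb (ι₂ m n)) (emb (ι₂ m n)) = 0 := by
  apply (bVV n).ext
  rintro ⟨i, j⟩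
  simp only [bVV_apply, LinearMap.comp_apply, TensorProduct.map_tmul, emb_e,
    LinearMap.zero_apply]
  rw [P11_e, if_neg]
  rintro ⟨h, -⟩
  rw [ι₂_val] at h
  omega

lemma P22_red (m n : ℕ) :
    P22 m n ∘ₗ TensorProduct.map (emb (ι₂ m n)) (emb (ι₂ m n)) =
      TensorProduct.map (emb (ι₂ m n)) (emb (ι₂ m n)) := by
  apply (bVV n).ext
  rintro ⟨i, j⟩
  simp only [bVV_apply, LinearMap.comp_apply, TensorProduct.map_tmul, emb_e]
  rw [P22_e, if_pos ⟨by simp [ι₂_val], by simp [ι₂_val]⟩]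

lemma levi_sq (m n : ℕ) :
    levi m n ∘ₗ levi m n =
      (q - q⁻¹) • ((P11 m n + P22 m n) ∘ₗ levi m n) + LinearMap.id ∧
    levi m n ∘ₗ levi m n =
      (q - q⁻¹) • (levi m n ∘ₗ (P11 m n + P22 m n)) + LinearMap.id := by
  set Em := TensorProduct.map (emb (ι₁ m n)) (emb (ι₁ m n)) with hEm
  set En := TensorProduct.map (emb (ι₂ m n)) (emb (ι₂ m n)) with hEn
  have key : ∀ p : Fin (m+n) × Fin (m+n),
      (levi m n (levi m n (bVV (m+n) p)) =
        (q - q⁻¹) • (P11 m n + P22 m n) (levi m n (bVV (m+n) p)) + bVV (m+n) p) ∧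
      (levi m n (levi m n (bVV (m+n) p)) =
        (q - q⁻¹) • levi m n ((P11 m n + P22 m n) (bVV (m+n) p)) + bVV (m+n) p) := by
    rintro ⟨a, b⟩
    rw [bVV_apply]
    by_cases ha : (a : ℕ) < m <;> by_cases hb : (b : ℕ) < m
    · -- green-green
      have hx : e a ⊗ₜ[F] e b = Em (e (⟨a, ha⟩ : Fin m) ⊗ₜ[F] e (⟨b, hb⟩ : Fin m)) := by
        rw [hEm, TensorProduct.map_tmul, emb_e, emb_e,
          show ι₁ m n ⟨a, ha⟩ = a from Fin.ext rfl,
          show ι₁ m n ⟨b, hb⟩ = b from Fin.ext rfl]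
      set y := e (⟨a, ha⟩ : Fin m) ⊗ₜ[F] e (⟨b, hb⟩ : Fin m) with hy
      have h1 : levi m n (Em y) = Em (β m y) := LinearMap.congr_fun (levi_green m n) y
      have h2 : levi m n (Em (β m y)) = Em (β m (β m y)) :=
        LinearMap.congr_fun (levi_green m n) (β m y)
      have h3 : β m (β m y) = (q - q⁻¹) • β m y + y :=
        LinearMap.congr_fun (beta_skein m) y
      have hP : ∀ z, (P11 m n + P22 m n) (Em z) = Em z := by
        intro z
        have := LinearMap.congr_fun (P11_green m n) z
        have := LinearMap.congr_fun (P22_green m n) z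
        simp_all [LinearMap.add_apply]
      constructor
      · rw [hx, h1, h2, h3, map_add, map_smul, hP]
      · rw [hx, h1, h2, h3, map_add, map_smul, hP, h1]
    · -- green-red: mixed
      have hL : levi m n (e a ⊗ₜ[F] e b) = e b ⊗ₜ[F] e a := by
        rw [levi_e, dif_pos ha, dif_neg hb]
      have hL2 : levi m n (e b ⊗ₜ[F] e a) = e a ⊗ₜ[F] e b := by
        rw [levi_e, dif_neg hb, dif_pos ha]
      have hP1 : (P11 m n + P22 m n) (e a ⊗ₜ[F] e b) = 0 := by
        simp only [LinearMap.add_apply, P11_e, P22_e]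
        rw [if_neg (by tauto), if_neg (by omega)]; simp
      have hP2 : (P11 m n + P22 m n) (e b ⊗ₜ[F] e a) = 0 := by
        simp only [LinearMap.add_apply, P11_e, P22_e]
        rw [if_neg (by tauto), if_neg (by omega)]; simp
      rw [hL, hL2, hP1, hP2]
      simp
    · -- red-green: mixed
      have hL : levi m n (e a ⊗ₜ[F] e b) = e b ⊗ₜ[F] e a := by
        rw [levi_e, dif_neg ha, dif_pos hb]
      have hL2 : levi m n (e b ⊗ₜ[F] e a) = e a ⊗ₜ[F] e b := by
        rw [levi_e, dif_pos hb, dif_neg ha]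
      have hP1 : (P11 m n + P22 m n) (e a ⊗ₜ[F] e b) = 0 := by
        simp only [LinearMap.add_apply, P11_e, P22_e]
        rw [if_neg (by tauto), if_neg (by omega)]; simp
      have hP2 : (P11 m n + P22 m n) (e b ⊗ₜ[F] e a) = 0 := by
        simp only [LinearMap.add_apply, P11_e, P22_e]
        rw [if_neg (by tauto), if_neg (by omega)]; simp
      rw [hL, hL2, hP1, hP2]
      simp
    · -- red-red
      have hx : e a ⊗ₜ[F] e b =
          En (e (⟨(a:ℕ) - m, by have := a.isLt; omega⟩ : Fin n) ⊗ₜ[F]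
              e (⟨(b:ℕ) - m, by have := b.isLt; omega⟩ : Fin n)) := by
        rw [hEn, TensorProduct.map_tmul, emb_e, emb_e,
          show ι₂ m n ⟨(a:ℕ) - m, by have := a.isLt; omega⟩ = a
            from Fin.ext (by simp [ι₂_val]; omega),
          show ι₂ m n ⟨(b:ℕ) - m, by have := b.isLt; omega⟩ = b
            from Fin.ext (by simp [ι₂_val]; omega)]
      set y := e (⟨(a:ℕ) - m, by have := a.isLt; omega⟩ : Fin n) ⊗ₜ[F]
              e (⟨(b:ℕ) - m, by have := b.isLt; omega⟩ : Fin n) with hy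
      have h1 : levi m n (En y) = En (β n y) := LinearMap.congr_fun (levi_red m n) y
      have h2 : levi m n (En (β n y)) = En (β n (β n y)) :=
        LinearMap.congr_fun (levi_red m n) (β n y)
      have h3 : β n (β n y) = (q - q⁻¹) • β n y + y :=
        LinearMap.congr_fun (beta_skein n) y
      have hP : ∀ z, (P11 m n + P22 m n) (En z) = En z := by
        intro z
        have := LinearMap.congr_fun (P11_red m n) z
        have := LinearMap.congr_fun (P22_red m n) z
        simp_all [LinearMap.add_apply]
      constructor
      · rw [hx, h1, h2, h3, map_add, map_smul, hP]
      · rw [hx, h1, h2, h3, map_add, map_smul, hP, h1]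
  constructor
  · apply (bVV (m+n)).ext
    intro p
    simp only [LinearMap.comp_apply, LinearMap.add_apply, LinearMap.smul_apply,
      LinearMap.id_apply]
    exact (key p).1
  · apply (bVV (m+n)).ext
    intro p
    simp only [LinearMap.comp_apply, LinearMap.add_apply, LinearMap.smul_apply,
      LinearMap.id_apply]
    exact (key p).2


/-- The modified skein relation for the Levi braiding:
`c_{m,n} - c_{m,n}⁻¹ = (q - q⁻¹) • (P₁₁ + P₂₂)`. -/
theorem levi_modified_skein (m n : ℕ) :
    ∃ cinv : V (m + n) ⊗[F] V (m + n) →ₗ[F] V (m + n) ⊗[F] V (m + n),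
      cinv ∘ₗ levi m n = LinearMap.id ∧ levi m n ∘ₗ cinv = LinearMap.id ∧
      levi m n - cinv = (q - q⁻¹) • (P11 m n + P22 m n) := by
  classical
  refine ⟨levi m n - (q - q⁻¹) • (P11 m n + P22 m n), ?_, ?_, ?_⟩
  · rw [LinearMap.sub_comp, LinearMap.smul_comp, (levi_sq m n).1]
    abel
  · rw [LinearMap.comp_sub, LinearMap.comp_smul, (levi_sq m n).2]
    abel
  · abel


end
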